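/- Let k ≥ 3 and G = C(3k+1; {1,2,4}) with vertices v_1,…,v_{3k+1}. The set X = {v_1, v_3} ∪ ⋃_{t=2}^{k} {v_{3t−1}, v_{3t}} is a vertex cut with |X| = 2k and c(G−X) = k−1; hence τ(G) ≤ 2k/(k−1). -/

import Mathlib

open SimpleGraph

def circGraph (n : ℕ) (s : Set (ZMod n)) : SimpleGraph (ZMod n) where
  Adj i j := i ≠ j ∧ (i - j ∈ s ∨ j - i ∈ s)
  symm := ⟨fun i j h => ⟨h.1.symm, h.2.symm⟩⟩
  loopless := ⟨fun i h => h.1 rfl⟩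

/-- Number of connected components of `G - S`. -/
noncomputable def numComp {V : Type*} (G : SimpleGraph V) (S : Set V) : ℕ :=
  Nat.card ((G.induce Sᶜ).ConnectedComponent)

/-- `S` is a vertex cut: removing `S` leaves a disconnected graph. -/
def IsVertexCut {V : Type*} (G : SimpleGraph V) (S : Set V) : Prop :=
  1 < numComp G S

/-- Toughness: minimum of |S| / c(G - S) over vertex cuts `S`. -/
noncomputable def toughness {V : Type*} (G : SimpleGraph V) : ℝ :=
  sInf {x : ℝ | ∃ S : Set V, IsVertexCut G S ∧ x = (S.ncard : ℝ) / (numComp G S : ℝ)}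

def MinimallyTough {V : Type*} (G : SimpleGraph V) (t : ℝ) : Prop :=
  toughness G = t ∧ ∀ e ∈ G.edgeSet, toughness (G.deleteEdges {e}) < t

section aux
variable {k : ℕ}

def Xk (k : ℕ) : Set (ZMod (3*k+1)) :=
  {v | v = ((1 : ℕ) : ZMod (3*k+1)) ∨ v = ((3 : ℕ) : ZMod (3*k+1)) ∨
    ∃ t : ℕ, 2 ≤ t ∧ t ≤ k ∧
      (v = ((3*t-1 : ℕ) : ZMod (3*k+1)) ∨ v = ((3*t : ℕ) : ZMod (3*k+1)))}

instance : NeZero (3*k+1) := ⟨by omega⟩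

lemma mem_Xk_iff (hk : 3 ≤ k) (v : ZMod (3*k+1)) :
    v ∈ Xk k ↔ (v.val = 1 ∨ (v.val % 3 = 0 ∧ v.val ≠ 0) ∨ (v.val % 3 = 2 ∧ v.val ≠ 2)) := by
  constructor
  · rintro (rfl | rfl | ⟨t, ht2, htk, (rfl | rfl)⟩) <;>
      rw [ZMod.val_cast_of_lt (by omega)] <;> omega
  · intro h
    have hv : ((v.val : ℕ) : ZMod (3*k+1)) = v := ZMod.natCast_rightInverse v
    have hlt := ZMod.val_lt v
    rcases h with h1 | ⟨h0, hne⟩ | ⟨h2, hne⟩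
    · refine Or.inl ?_
      conv_lhs => rw [← hv]
      exact congrArg _ (by omega)
    · rcases eq_or_ne v.val 3 with h3 | h3
      · refine Or.inr (Or.inl ?_)
        conv_lhs => rw [← hv]
        exact congrArg _ (by omega)
      · refine Or.inr (Or.inr ⟨v.val / 3, by omega, by omega, Or.inr ?_⟩)
        conv_lhs => rw [← hv]
        exact congrArg _ (by omega)
    · refine Or.inr (Or.inr ⟨(v.val + 1) / 3, by omega, by omega, Or.inl ?_⟩)
      conv_lhs => rw [← hv]
      exact congrArg _ (by omega)

lemma not_mem_Xk (hk : 3 ≤ k) (v : ZMod (3*k+1)) :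
    v ∈ (Xk k)ᶜ ↔ (v.val = 0 ∨ v.val = 2 ∨ (v.val % 3 = 1 ∧ v.val ≠ 1)) := by
  rw [Set.mem_compl_iff, mem_Xk_iff hk]
  omega

end aux
def Fk (k : ℕ) : Finset ℕ :=
  insert 1 (insert 3 ((Finset.Icc 2 k).biUnion fun t => {3*t-1, 3*t}))

lemma mem_Fk {k m : ℕ} : m ∈ Fk k ↔
    m = 1 ∨ m = 3 ∨ ∃ t, 2 ≤ t ∧ t ≤ k ∧ (m = 3*t-1 ∨ m = 3*t) := by
  simp only [Fk, Finset.mem_insert, Finset.mem_biUnion, Finset.mem_Icc, Finset.mem_singleton]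
  constructor
  · rintro (h|h|⟨t,⟨h1,h2⟩,h⟩)
    exacts [Or.inl h, Or.inr (Or.inl h), Or.inr (Or.inr ⟨t, h1, h2, h⟩)]
  · rintro (h|h|⟨t,h1,h2,h⟩)
    exacts [Or.inl h, Or.inr (Or.inl h), Or.inr (Or.inr ⟨t, ⟨h1, h2⟩, h⟩)]

lemma Xk_eq (k : ℕ) : Xk k = ↑((Fk k).image (Nat.cast : ℕ → ZMod (3*k+1))) := by
  ext v
  simp only [Xk, Set.mem_setOf_eq, Finset.coe_image, Set.mem_image, Finset.mem_coe, mem_Fk]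
  constructor
  · rintro (rfl|rfl|⟨t,h1,h2,(rfl|rfl)⟩)
    exacts [⟨1, Or.inl rfl, rfl⟩, ⟨3, Or.inr (Or.inl rfl), rfl⟩,
      ⟨3*t-1, Or.inr (Or.inr ⟨t, h1, h2, Or.inl rfl⟩), rfl⟩,
      ⟨3*t, Or.inr (Or.inr ⟨t, h1, h2, Or.inr rfl⟩), rfl⟩]
  · rintro ⟨m, (rfl|rfl|⟨t,h1,h2,(rfl|rfl)⟩), rfl⟩
    exacts [Or.inl rfl, Or.inr (Or.inl rfl), Or.inr (Or.inr ⟨t, h1, h2, Or.inl rfl⟩),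
      Or.inr (Or.inr ⟨t, h1, h2, Or.inr rfl⟩)]

lemma Fk_card (hk : 3 ≤ k) : (Fk k).card = 2*k := by
  have hb : ((Finset.Icc 2 k).biUnion fun t => ({3*t-1, 3*t} : Finset ℕ)).card = 2*(k-1) := by
    rw [Finset.card_biUnion]
    · have : ∀ t ∈ Finset.Icc 2 k, ({3*t-1, 3*t} : Finset ℕ).card = 2 := by
        intro t ht
        simp only [Finset.mem_Icc] at ht
        rw [Finset.card_insert_of_notMem (by simp only [Finset.mem_singleton]; omega)]
        rfl
      rw [Finset.sum_congr rfl this, Finset.sum_const, Nat.card_Icc, smul_eq_mul]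
      omega
    · intro t ht u hu htu
      simp only [Finset.coe_Icc, Set.mem_Icc] at ht hu
      rw [Function.onFun, Finset.disjoint_left]
      intro a ha hb
      simp only [Finset.mem_insert, Finset.mem_singleton] at ha hb
      omega
  rw [Fk, Finset.card_insert_of_notMem, Finset.card_insert_of_notMem, hb]
  · omega
  · simp only [Finset.mem_biUnion, Finset.mem_Icc, Finset.mem_insert, Finset.mem_singleton]
    rintro ⟨t, ⟨h1, h2⟩, (h|h)⟩ <;> omega
  · simp only [Finset.mem_insert, Finset.mem_biUnion, Finset.mem_Icc, Finset.mem_singleton]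
    rintro (h | ⟨t, ⟨h1, h2⟩, (h|h)⟩) <;> omega

lemma Xk_ncard (hk : 3 ≤ k) : (Xk k).ncard = 2*k := by
  rw [Xk_eq, Set.ncard_coe_finset, Finset.card_image_of_injOn, Fk_card hk]
  intro a ha b hb hab
  simp only [Finset.mem_coe, mem_Fk] at ha hb
  have ha' : a < 3*k+1 := by rcases ha with h|h|⟨t,h1,h2,(h|h)⟩ <;> omega
  have hb' : b < 3*k+1 := by rcases hb with h|h|⟨t,h1,h2,(h|h)⟩ <;> omega
  rw [← ZMod.val_cast_of_lt ha', ← ZMod.val_cast_of_lt hb', hab]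
section aux2
variable {k : ℕ}

lemma adj_aux (hk : 3 ≤ k) {a b : ZMod (3*k+1)}
    (ha : a.val = 0 ∨ a.val = 2 ∨ (a.val % 3 = 1 ∧ a.val ≠ 1))
    (hb : b.val = 0 ∨ b.val = 2 ∨ (b.val % 3 = 1 ∧ b.val ≠ 1))
    (h : a - b ∈ ({1, 2, 4} : Set (ZMod (3*k+1)))) : a.val ≤ 4 ∧ b.val ≤ 4 := by
  have e1 : ((1:ℕ) : ZMod (3*k+1)) = 1 := by norm_num
  have e2 : ((2:ℕ) : ZMod (3*k+1)) = 2 := by norm_num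
  have e4 : ((4:ℕ) : ZMod (3*k+1)) = 4 := by norm_num
  have hd : (a - b).val = 1 ∨ (a - b).val = 2 ∨ (a - b).val = 4 := by
    rcases h with h|h|h <;> rw [h]
    · exact Or.inl (by rw [← e1, ZMod.val_cast_of_lt (by omega)])
    · exact Or.inr (Or.inl (by rw [← e2, ZMod.val_cast_of_lt (by omega)]))
    · exact Or.inr (Or.inr (by rw [← e4, ZMod.val_cast_of_lt (by omega)]))
  have hab : a = b + (a - b) := by ring
  have hv : a.val = (b.val + (a-b).val) % (3*k+1) := by
    conv_lhs => rw [hab]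
    exact ZMod.val_add _ _
  have hbl := ZMod.val_lt b
  have hal := ZMod.val_lt a
  rcases Nat.lt_or_ge (b.val + (a-b).val) (3*k+1) with hlt | hge
  · rw [Nat.mod_eq_of_lt hlt] at hv; omega
  · rw [Nat.mod_eq_sub_mod hge, Nat.mod_eq_of_lt (by omega)] at hv
    omega

lemma numComp_Xk (hk : 3 ≤ k) :
    numComp (circGraph (3*k+1) {1, 2, 4}) (Xk k) = k - 1 := by
  classical
  set G' := (circGraph (3*k+1) ({1, 2, 4} : Set (ZMod (3*k+1)))).induce (Xk k)ᶜ with hG'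
  have hP : ∀ v : ((Xk k)ᶜ : Set (ZMod (3*k+1))), (v.1.val = 0 ∨ v.1.val = 2 ∨ (v.1.val % 3 = 1 ∧ v.1.val ≠ 1)) :=
    fun v => (not_mem_Xk hk v.1).mp v.2
  have hVlt : ∀ v : ((Xk k)ᶜ : Set (ZMod (3*k+1))), v.1.val < 3*k+1 := fun v => ZMod.val_lt _
  set cls : ℕ → ℕ := fun m => if m ≤ 4 then 0 else m / 3 - 1 with hclsdef
  have hcls : ∀ v : ((Xk k)ᶜ : Set (ZMod (3*k+1))), cls v.1.val < k - 1 := by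
    intro v
    have h1 := hP v; have h2 := hVlt v
    simp only [hclsdef]
    split <;> omega
  set F : ((Xk k)ᶜ : Set (ZMod (3*k+1))) → Fin (k-1) := fun v => ⟨cls v.1.val, hcls v⟩ with hFdef
  have hadj : ∀ v w : ((Xk k)ᶜ : Set (ZMod (3*k+1))), G'.Adj v w → F v = F w := by
    intro v w hvw
    obtain ⟨hne, hmem | hmem⟩ := hvw
    · obtain ⟨h1, h2⟩ := adj_aux hk (hP v) (hP w) hmem
      apply Fin.ext
      show cls v.1.val = cls w.1.val
      simp only [hclsdef]
      rw [if_pos h1, if_pos h2]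
    · obtain ⟨h2, h1⟩ := adj_aux hk (hP w) (hP v) hmem
      apply Fin.ext
      show cls v.1.val = cls w.1.val
      simp only [hclsdef]
      rw [if_pos h1, if_pos h2]
  -- special vertices
  have m0 : ((0:ℕ) : ZMod (3*k+1)) ∈ (Xk k)ᶜ := by
    rw [not_mem_Xk hk, ZMod.val_cast_of_lt (by omega)]; omega
  have m2 : ((2:ℕ) : ZMod (3*k+1)) ∈ (Xk k)ᶜ := by
    rw [not_mem_Xk hk, ZMod.val_cast_of_lt (by omega)]; omega
  have m4 : ((4:ℕ) : ZMod (3*k+1)) ∈ (Xk k)ᶜ := by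
    rw [not_mem_Xk hk, ZMod.val_cast_of_lt (by omega)]; omega
  set v0 : ((Xk k)ᶜ : Set (ZMod (3*k+1))) := ⟨_, m0⟩ with hv0
  set v2 : ((Xk k)ᶜ : Set (ZMod (3*k+1))) := ⟨_, m2⟩ with hv2
  set v4 : ((Xk k)ᶜ : Set (ZMod (3*k+1))) := ⟨_, m4⟩ with hv4
  have hne : ∀ a b : ℕ, a < 3*k+1 → b < 3*k+1 → a ≠ b →
      ((a : ZMod (3*k+1)) ≠ (b : ZMod (3*k+1))) := by
    intro a b ha hb hab h
    exact hab (by rw [← ZMod.val_cast_of_lt ha, ← ZMod.val_cast_of_lt hb, h])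
  have mem124 : ∀ x : ZMod (3*k+1), x = 1 ∨ x = 2 ∨ x = 4 →
      x ∈ ({1,2,4} : Set (ZMod (3*k+1))) := by
    rintro x (rfl|rfl|rfl) <;> simp
  have adj02 : G'.Adj v0 v2 :=
    ⟨hne 0 2 (by omega) (by omega) (by omega),
      Or.inr (mem124 _ (Or.inr (Or.inl (by
        show ((2:ℕ) : ZMod (3*k+1)) - ((0:ℕ) : ZMod (3*k+1)) = 2
        push_cast; ring))))⟩
  have adj24 : G'.Adj v2 v4 :=
    ⟨hne 2 4 (by omega) (by omega) (by omega),
      Or.inr (mem124 _ (Or.inr (Or.inl (by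
        show ((4:ℕ) : ZMod (3*k+1)) - ((2:ℕ) : ZMod (3*k+1)) = 2
        push_cast; ring))))⟩
  have adj04 : G'.Adj v0 v4 :=
    ⟨hne 0 4 (by omega) (by omega) (by omega),
      Or.inr (mem124 _ (Or.inr (Or.inr (by
        show ((4:ℕ) : ZMod (3*k+1)) - ((0:ℕ) : ZMod (3*k+1)) = 4
        push_cast; ring))))⟩
  have hid : ∀ v : ((Xk k)ᶜ : Set (ZMod (3*k+1))), v.1.val ≤ 4 → v = v0 ∨ v = v2 ∨ v = v4 := by
    intro v hv
    have h1 := hP v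
    have h04 : v.1.val = 0 ∨ v.1.val = 2 ∨ v.1.val = 4 := by omega
    rcases h04 with h|h|h
    · exact Or.inl (Subtype.ext (ZMod.val_injective _
        (by rw [ZMod.val_cast_of_lt (show (0:ℕ) < 3*k+1 by omega)]; exact h)))
    · exact Or.inr (Or.inl (Subtype.ext (ZMod.val_injective _
        (by rw [ZMod.val_cast_of_lt (show (2:ℕ) < 3*k+1 by omega)]; exact h))))
    · exact Or.inr (Or.inr (Subtype.ext (ZMod.val_injective _
        (by rw [ZMod.val_cast_of_lt (show (4:ℕ) < 3*k+1 by omega)]; exact h))))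
  have reach : ∀ v w : ((Xk k)ᶜ : Set (ZMod (3*k+1))), v.1.val ≤ 4 → w.1.val ≤ 4 → G'.Reachable v w := by
    intro v w hv hw
    rcases hid v hv with rfl|rfl|rfl <;> rcases hid w hw with rfl|rfl|rfl
    exacts [Reachable.refl _, adj02.reachable, adj04.reachable,
      adj02.reachable.symm, Reachable.refl _, adj24.reachable,
      adj04.reachable.symm, adj24.reachable.symm, Reachable.refl _]
  have key : ∀ v w : ((Xk k)ᶜ : Set (ZMod (3*k+1))), F v = F w → G'.Reachable v w := by
    intro v w h
    have h' : cls v.1.val = cls w.1.val := congrArg Fin.val h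
    have pv := hP v; have pw := hP w
    have lv := hVlt v; have lw := hVlt w
    by_cases h4 : v.1.val ≤ 4
    · by_cases w4 : w.1.val ≤ 4
      · exact reach v w h4 w4
      · exfalso
        simp only [hclsdef] at h'
        rw [if_pos h4, if_neg w4] at h'
        omega
    · by_cases w4 : w.1.val ≤ 4
      · exfalso
        simp only [hclsdef] at h'
        rw [if_neg h4, if_pos w4] at h'
        omega
      · have heq : v.1.val = w.1.val := by
          simp only [hclsdef] at h'
          rw [if_neg h4, if_neg w4] at h'
          omega
        have : v = w := Subtype.ext (ZMod.val_injective _ heq)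
        exact this ▸ Reachable.refl v
  have hwalk : ∀ (v w : ((Xk k)ᶜ : Set (ZMod (3*k+1)))) (_ : G'.Walk v w), F v = F w := by
    intro v w p
    induction p with
    | nil => rfl
    | cons h _ ih => exact (hadj _ _ h).trans ih
  have hbij : Function.Bijective
      (ConnectedComponent.lift (G := G') F (fun v w p _ => hwalk v w p)) := by
    constructor
    · intro c d h
      obtain ⟨v, rfl⟩ := c.exists_rep
      obtain ⟨w, rfl⟩ := d.exists_rep
      exact ConnectedComponent.sound (key v w h)
    · intro i
      have hlt : 3*(i:ℕ)+4 < 3*k+1 := by have := i.2; omega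
      have hm : ((3*(i:ℕ)+4 : ℕ) : ZMod (3*k+1)) ∈ (Xk k)ᶜ := by
        rw [not_mem_Xk hk, ZMod.val_cast_of_lt hlt]; omega
      refine ⟨G'.connectedComponentMk ⟨_, hm⟩, ?_⟩
      apply Fin.ext
      show cls (((3*(i:ℕ)+4 : ℕ) : ZMod (3*k+1)).val) = (i : ℕ)
      rw [ZMod.val_cast_of_lt hlt]
      simp only [hclsdef]
      split <;> omega
  have hcard := Nat.card_eq_of_bijective _ hbij
  have h0 : numComp (circGraph (3*k+1) ({1, 2, 4} : Set (ZMod (3*k+1)))) (Xk k)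
      = Nat.card G'.ConnectedComponent := rfl
  rw [h0, hcard, Nat.card_eq_fintype_card, Fintype.card_fin]

end aux2
theorem stmt12 (k : ℕ) (hk : 3 ≤ k) :
    let G := circGraph (3*k+1) {1, 2, 4}
    let X : Set (ZMod (3*k+1)) :=
      {v | v = ((1 : ℕ) : ZMod (3*k+1)) ∨ v = ((3 : ℕ) : ZMod (3*k+1)) ∨
        ∃ t : ℕ, 2 ≤ t ∧ t ≤ k ∧
          (v = ((3*t-1 : ℕ) : ZMod (3*k+1)) ∨ v = ((3*t : ℕ) : ZMod (3*k+1)))}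
    IsVertexCut G X ∧ X.ncard = 2*k ∧ numComp G X = k - 1 ∧
      toughness G ≤ (2 * (k : ℝ)) / ((k : ℝ) - 1) := by
  intro G X
  have hn : numComp G X = k - 1 := numComp_Xk hk
  have hcut : IsVertexCut G X := by
    show 1 < numComp G X
    omega
  have hcard : X.ncard = 2*k := Xk_ncard hk
  refine ⟨hcut, hcard, hn, ?_⟩
  have hmem : (2*(k:ℝ))/((k:ℝ)-1) ∈
      {x : ℝ | ∃ S : Set (ZMod (3*k+1)), IsVertexCut G S ∧
        x = (S.ncard : ℝ) / (numComp G S : ℝ)} := by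
    refine ⟨X, hcut, ?_⟩
    rw [hcard, hn]
    push_cast [Nat.cast_sub (by omega : 1 ≤ k)]
    ring
  exact csInf_le ⟨0, by rintro x ⟨S, -, rfl⟩; positivity⟩ hmem
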